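/- Let r, s ≥ 1. Define the generalized Whitney map f^w : M(r×s, ℂ) → M((2r−1)×(2s−1), ℂ) as follows: for Z = (z_{ij}), the entry of f^w(Z) in row i (1 ≤ i ≤ r) and column j is z_{i1} z_{1j} for 1 ≤ j ≤ s, and is z_{i,j−s+1} for s+1 ≤ j ≤ 2s−1; the entry in row r+i−1 (2 ≤ i ≤ r) and column j is z_{ij} for 1 ≤ j ≤ s, and is 0 for s+1 ≤ j ≤ 2s−1. Then f^w maps Ω_{r,s} into Ω_{2r−1,2s−1}, and the restriction f^w : Ω_{r,s} → Ω_{2r−1,2s−1} is a proper map, i.e., the preimage under f^w of every compact subset of Ω_{2r−1,2s−1} is compact. -/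

import Mathlib

open Matrix
open scoped ComplexOrder

 section aux18

lemma aux18_J (s : ℕ) (J : Fin (2 * s - 1)) (hJ : ¬ (J : ℕ) < s) : (J : ℕ) - s + 1 < s := by
  have := J.isLt; omega

lemma aux18_I (r : ℕ) (I : Fin (2 * r - 1)) (hI : ¬ (I : ℕ) < r) : (I : ℕ) - r + 1 < r := by
  have := I.isLt; omega

lemma sum_cast {M : Type*} [AddCommMonoid M] {m n k : ℕ} (h : k = m + n) (F : Fin k → M) :
    ∑ i, F i = (∑ i : Fin m, F ⟨i, by omega⟩) + ∑ i : Fin n, F ⟨m + i, by omega⟩ := by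
  subst h
  rw [Fin.sum_univ_add]
  rfl

noncomputable def Nf {r s : ℕ} (Z : Matrix (Fin r) (Fin s) ℂ) (x : Fin r → ℂ) : ℝ :=
  ∑ j, Complex.normSq ((Zᴴ *ᵥ x) j)

noncomputable def nn {r : ℕ} (x : Fin r → ℂ) : ℝ := ∑ i, Complex.normSq (x i)


lemma posdef_iff {r s : ℕ} (Z : Matrix (Fin r) (Fin s) ℂ) :
    (1 - Z * Zᴴ).PosDef ↔ ∀ x, x ≠ 0 → Nf Z x < nn x := by
  have herm : (1 - Z * Zᴴ).IsHermitian :=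
    (Matrix.isHermitian_one).sub (Matrix.isHermitian_mul_conjTranspose_self Z)
  have key : ∀ x : Fin r → ℂ, star x ⬝ᵥ ((1 - Z * Zᴴ) *ᵥ x) = ((nn x - Nf Z x : ℝ) : ℂ) := by
    intro x
    have h1 : star x ⬝ᵥ ((1 : Matrix (Fin r) (Fin r) ℂ) *ᵥ x) = ((nn x : ℝ) : ℂ) := by
      rw [Matrix.one_mulVec]
      simp [dotProduct, nn, Pi.star_apply, ← Complex.normSq_eq_conj_mul_self]
    have h2 : star x ⬝ᵥ ((Z * Zᴴ) *ᵥ x) = ((Nf Z x : ℝ) : ℂ) := by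
      rw [← Matrix.mulVec_mulVec, Matrix.dotProduct_mulVec]
      have : star x ᵥ* Z = star (Zᴴ *ᵥ x) := by
        rw [Matrix.star_mulVec, Matrix.conjTranspose_conjTranspose]
      rw [this]
      simp [dotProduct, Nf, Pi.star_apply, ← Complex.normSq_eq_conj_mul_self]
    rw [Matrix.sub_mulVec, dotProduct_sub, h1, h2]
    push_cast
    ring
  constructor
  · rw [Matrix.posDef_iff_dotProduct_mulVec]
    rintro ⟨-, hpd⟩ x hx
    have := hpd (x := x) hx
    rw [key x] at this
    have : (0:ℝ) < nn x - Nf Z x := by exact_mod_cast this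
    linarith
  · intro h
    refine Matrix.posDef_iff_dotProduct_mulVec.mpr ⟨herm, fun x hx => ?_⟩
    rw [key x]
    exact_mod_cast sub_pos.mpr (h x hx)

set_option maxHeartbeats 2000000 in
lemma key_pointwise {r s : ℕ} (hr : 1 ≤ r) (hs : 1 ≤ s)
    (Z : Matrix (Fin r) (Fin s) ℂ)
    (W : Matrix (Fin (2 * r - 1)) (Fin (2 * s - 1)) ℂ)
    (hW : ∀ (I : Fin (2 * r - 1)) (J : Fin (2 * s - 1)),
      W I J =
        if hI : (I : ℕ) < r then
          if hJ : (J : ℕ) < s then Z ⟨I, hI⟩ ⟨0, hs⟩ * Z ⟨0, hr⟩ ⟨J, hJ⟩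
          else Z ⟨I, hI⟩ ⟨(J : ℕ) - s + 1, aux18_J s J hJ⟩
        else
          if hJ : (J : ℕ) < s then Z ⟨(I : ℕ) - r + 1, aux18_I r I hI⟩ ⟨J, hJ⟩
          else 0)
    (x : Fin r → ℂ) (y : Fin (r - 1) → ℂ)
    (P : Fin (2 * r - 1) → ℂ) (Ξ : Fin r → ℂ)
    (hPx : ∀ i : Fin r, P ⟨i, by omega⟩ = x i)
    (hPy : ∀ i : Fin (r - 1), P ⟨r + i, by have := i.isLt; omega⟩ = y i)
    (hΞ0 : Ξ ⟨0, hr⟩ = (Zᴴ *ᵥ x) ⟨0, hs⟩)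
    (hΞy : ∀ i : Fin (r - 1), Ξ ⟨1 + i, by have := i.isLt; omega⟩ = y i)
    (J : Fin (2 * s - 1)) :
    (Wᴴ *ᵥ P) J = if hJ : (J : ℕ) < s then (Zᴴ *ᵥ Ξ) ⟨J, hJ⟩
      else (Zᴴ *ᵥ x) ⟨(J : ℕ) - s + 1, aux18_J s J hJ⟩ := by
  have hmv : (Wᴴ *ᵥ P) J = ∑ I : Fin (2 * r - 1), star (W I J) * P I := by
    simp [Matrix.mulVec, Matrix.conjTranspose_apply, dotProduct]
  by_cases hJ : (J : ℕ) < s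
  · rw [dif_pos hJ]
    have L1 : (∑ i : Fin r, star (W ⟨i, by omega⟩ J) * P ⟨i, by omega⟩)
        = star (Z ⟨0, hr⟩ ⟨J, hJ⟩) * Ξ ⟨0, hr⟩ := by
      have h1 : ∀ i : Fin r, star (W ⟨i, by omega⟩ J) * P ⟨i, by omega⟩
          = star (Z ⟨0, hr⟩ ⟨J, hJ⟩) * (star (Z i ⟨0, hs⟩) * x i) := by
        intro i
        rw [hW]
        rw [dif_pos (show ((⟨(i : ℕ), by omega⟩ : Fin (2 * r - 1)) : ℕ) < r from i.isLt)]
        rw [dif_pos hJ, hPx]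
        simp only [Fin.eta]
        rw [star_mul']
        ring
      rw [Finset.sum_congr rfl fun i _ => h1 i, ← Finset.mul_sum, hΞ0]
      congr 1
      all_goals simp [Matrix.mulVec, Matrix.conjTranspose_apply, dotProduct]
    have L2 : ∀ i : Fin (r - 1), star (W ⟨r + i, by have := i.isLt; omega⟩ J)
        * P ⟨r + i, by have := i.isLt; omega⟩
        = star (Z ⟨1 + i, by have := i.isLt; omega⟩ ⟨J, hJ⟩)
          * Ξ ⟨1 + i, by have := i.isLt; omega⟩ := by
      intro i
      have hWe : W ⟨r + i, by have := i.isLt; omega⟩ J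
          = Z ⟨1 + i, by have := i.isLt; omega⟩ ⟨J, hJ⟩ := by
        rw [hW]
        rw [dif_neg (show ¬ ((⟨r + (i : ℕ), by have := i.isLt; omega⟩ : Fin (2 * r - 1)) : ℕ) < r
          by simp)]
        rw [dif_pos hJ]
        congr 1
        exact Fin.ext (by simp; omega)
      rw [hWe, hPy, hΞy]
    have R : (Zᴴ *ᵥ Ξ) ⟨J, hJ⟩ = ∑ k : Fin r, star (Z k ⟨J, hJ⟩) * Ξ k := by
      simp [Matrix.mulVec, Matrix.conjTranspose_apply, dotProduct]
    rw [hmv, sum_cast (show 2 * r - 1 = r + (r - 1) by omega), L1,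
      Finset.sum_congr rfl fun i _ => L2 i, R,
      sum_cast (show r = 1 + (r - 1) by omega), Fin.sum_univ_one]
    norm_num
  · rw [dif_neg hJ]
    have h2 : ∀ i : Fin (r - 1), star (W ⟨r + i, by have := i.isLt; omega⟩ J)
        * P ⟨r + i, by have := i.isLt; omega⟩ = 0 := by
      intro i
      rw [hW]
      rw [dif_neg (show ¬ ((⟨r + (i : ℕ), by have := i.isLt; omega⟩ : Fin (2 * r - 1)) : ℕ) < r
        by simp)]
      rw [dif_neg hJ]
      simp
    have h1 : ∀ i : Fin r, star (W ⟨i, by omega⟩ J) * P ⟨i, by omega⟩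
        = star (Z i ⟨(J : ℕ) - s + 1, aux18_J s J hJ⟩) * x i := by
      intro i
      rw [hW]
      rw [dif_pos (show ((⟨(i : ℕ), by omega⟩ : Fin (2 * r - 1)) : ℕ) < r from i.isLt)]
      rw [dif_neg hJ, hPx]
    have hrhs : (Zᴴ *ᵥ x) (⟨(J : ℕ) - s + 1, aux18_J s J hJ⟩ : Fin s)
        = ∑ i : Fin r, star (Z i ⟨(J : ℕ) - s + 1, aux18_J s J hJ⟩) * x i := by
      simp [Matrix.mulVec, Matrix.conjTranspose_apply, dotProduct]
    rw [hmv, sum_cast (show 2 * r - 1 = r + (r - 1) by omega),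
      Finset.sum_congr rfl fun i _ => h1 i,
      Finset.sum_congr rfl fun i _ => h2 i, Finset.sum_const_zero, add_zero, hrhs]

set_option maxHeartbeats 2000000 in
lemma key_identity {r s : ℕ} (hr : 1 ≤ r) (hs : 1 ≤ s)
    (Z : Matrix (Fin r) (Fin s) ℂ)
    (W : Matrix (Fin (2 * r - 1)) (Fin (2 * s - 1)) ℂ)
    (hW : ∀ (I : Fin (2 * r - 1)) (J : Fin (2 * s - 1)),
      W I J =
        if hI : (I : ℕ) < r then
          if hJ : (J : ℕ) < s then Z ⟨I, hI⟩ ⟨0, hs⟩ * Z ⟨0, hr⟩ ⟨J, hJ⟩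
          else Z ⟨I, hI⟩ ⟨(J : ℕ) - s + 1, aux18_J s J hJ⟩
        else
          if hJ : (J : ℕ) < s then Z ⟨(I : ℕ) - r + 1, aux18_I r I hI⟩ ⟨J, hJ⟩
          else 0)
    (x : Fin r → ℂ) (y : Fin (r - 1) → ℂ)
    (P : Fin (2 * r - 1) → ℂ) (Ξ : Fin r → ℂ)
    (hPx : ∀ i : Fin r, P ⟨i, by omega⟩ = x i)
    (hPy : ∀ i : Fin (r - 1), P ⟨r + i, by have := i.isLt; omega⟩ = y i)
    (hΞ0 : Ξ ⟨0, hr⟩ = (Zᴴ *ᵥ x) ⟨0, hs⟩)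
    (hΞy : ∀ i : Fin (r - 1), Ξ ⟨1 + i, by have := i.isLt; omega⟩ = y i) :
    Nf W P = Nf Z Ξ + Nf Z x - Complex.normSq ((Zᴴ *ᵥ x) ⟨0, hs⟩) ∧
    nn P = nn x + nn Ξ - Complex.normSq (Ξ ⟨0, hr⟩) := by
  constructor
  · have e1 : Nf W P = (∑ j : Fin s, Complex.normSq ((Zᴴ *ᵥ Ξ) j))
        + ∑ j : Fin (s - 1),
            Complex.normSq ((Zᴴ *ᵥ x) ⟨1 + j, by have := j.isLt; omega⟩) := by
      rw [Nf, Finset.sum_congr rfl fun J _ => by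
        rw [key_pointwise hr hs Z W hW x y P Ξ hPx hPy hΞ0 hΞy J]]
      rw [sum_cast (show 2 * s - 1 = s + (s - 1) by omega)]
      congr 1
      · refine Finset.sum_congr rfl fun j _ => ?_
        rw [dif_pos (show ((⟨(j : ℕ), by omega⟩ : Fin (2 * s - 1)) : ℕ) < s from j.isLt)]
      · refine Finset.sum_congr rfl fun j _ => ?_
        rw [dif_neg (show ¬ ((⟨s + (j : ℕ), by have := j.isLt; omega⟩ : Fin (2 * s - 1)) : ℕ) < s
          by simp)]
        congr 2
        exact Fin.ext (by simp; omega)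
    have e2 : Nf Z x = Complex.normSq ((Zᴴ *ᵥ x) ⟨0, hs⟩)
        + ∑ j : Fin (s - 1),
            Complex.normSq ((Zᴴ *ᵥ x) ⟨1 + j, by have := j.isLt; omega⟩) := by
      rw [Nf, sum_cast (show s = 1 + (s - 1) by omega), Fin.sum_univ_one]
      norm_num
    rw [e1, e2, Nf]
    ring
  · have e1 : nn P = nn x + ∑ i : Fin (r - 1), Complex.normSq (y i) := by
      rw [nn, sum_cast (show 2 * r - 1 = r + (r - 1) by omega)]
      congr 1
      · exact Finset.sum_congr rfl fun i _ => by rw [hPx]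
      · exact Finset.sum_congr rfl fun i _ => by rw [hPy]
    have e2 : nn Ξ = Complex.normSq (Ξ ⟨0, hr⟩)
        + ∑ i : Fin (r - 1), Complex.normSq (y i) := by
      rw [nn, sum_cast (show r = 1 + (r - 1) by omega), Fin.sum_univ_one]
      norm_num
      exact Finset.sum_congr rfl fun i _ => by rw [hΞy]
    rw [e1, e2]
    ring

lemma Nf_zero {r s : ℕ} (Z : Matrix (Fin r) (Fin s) ℂ) : Nf Z 0 = 0 := by
  simp [Nf]

lemma nn_zero {r : ℕ} : nn (0 : Fin r → ℂ) = 0 := by simp [nn]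

lemma Nf_smul {r s : ℕ} (Z : Matrix (Fin r) (Fin s) ℂ) (c : ℂ) (x : Fin r → ℂ) :
    Nf Z (fun k => c * x k) = Complex.normSq c * Nf Z x := by
  have : (fun k => c * x k) = c • x := rfl
  rw [this, Nf, Nf, Finset.mul_sum]
  refine Finset.sum_congr rfl fun j _ => ?_
  rw [Matrix.mulVec_smul]
  simp [Complex.normSq_mul]

lemma nn_smul {r : ℕ} (c : ℂ) (x : Fin r → ℂ) :
    nn (fun k => c * x k) = Complex.normSq c * nn x := by
  rw [nn, nn, Finset.mul_sum]
  exact Finset.sum_congr rfl fun i _ => by simp [Complex.normSq_mul]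

lemma Nf_le {r s : ℕ} (Z : Matrix (Fin r) (Fin s) ℂ)
    (hZ : ∀ v, v ≠ 0 → Nf Z v < nn v) (v : Fin r → ℂ) : Nf Z v ≤ nn v := by
  by_cases hv : v = 0
  · subst hv; rw [Nf_zero, nn_zero]
  · exact (hZ v hv).le

set_option maxHeartbeats 2000000 in
lemma part1 {r s : ℕ} (hr : 1 ≤ r) (hs : 1 ≤ s)
    (Z : Matrix (Fin r) (Fin s) ℂ)
    (W : Matrix (Fin (2 * r - 1)) (Fin (2 * s - 1)) ℂ)
    (hW : ∀ (I : Fin (2 * r - 1)) (J : Fin (2 * s - 1)),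
      W I J =
        if hI : (I : ℕ) < r then
          if hJ : (J : ℕ) < s then Z ⟨I, hI⟩ ⟨0, hs⟩ * Z ⟨0, hr⟩ ⟨J, hJ⟩
          else Z ⟨I, hI⟩ ⟨(J : ℕ) - s + 1, aux18_J s J hJ⟩
        else
          if hJ : (J : ℕ) < s then Z ⟨(I : ℕ) - r + 1, aux18_I r I hI⟩ ⟨J, hJ⟩
          else 0)
    (hZ : ∀ v, v ≠ 0 → Nf Z v < nn v) :
    ∀ P, P ≠ 0 → Nf W P < nn P := by
  intro P hP
  set x : Fin r → ℂ := fun i => P ⟨i, by omega⟩ with hx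
  set y : Fin (r - 1) → ℂ := fun i => P ⟨r + i, by have := i.isLt; omega⟩ with hy
  set Ξ : Fin r → ℂ := fun k => if h : (k : ℕ) = 0 then (Zᴴ *ᵥ x) ⟨0, hs⟩
    else y ⟨(k : ℕ) - 1, by have := k.isLt; omega⟩ with hΞ
  have hΞ0 : Ξ ⟨0, hr⟩ = (Zᴴ *ᵥ x) ⟨0, hs⟩ := by
    simp [hΞ]
  have hΞy : ∀ i : Fin (r - 1), Ξ ⟨1 + i, by have := i.isLt; omega⟩ = y i := by
    intro i
    simp only [hΞ]
    rw [dif_neg (show ¬ ((⟨1 + (i : ℕ), by have := i.isLt; omega⟩ : Fin r) : ℕ) = 0 by simp)]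
    congr 1
    exact Fin.ext (by simp)
  have hPx : ∀ i : Fin r, P ⟨i, by omega⟩ = x i := fun i => rfl
  have hPy : ∀ i : Fin (r - 1), P ⟨r + i, by have := i.isLt; omega⟩ = y i := fun i => rfl
  obtain ⟨e1, e2⟩ := key_identity hr hs Z W hW x y P Ξ hPx hPy hΞ0 hΞy
  by_cases hx0 : x = 0
  · -- then y ≠ 0, Ξ ≠ 0
    have hy0 : y ≠ 0 := by
      intro hy0
      apply hP
      funext I
      by_cases hI : (I : ℕ) < r
      · have : P I = x ⟨I, hI⟩ := by rw [hx]
        rw [this, hx0]; rfl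
      · have hIr : (I : ℕ) - r < r - 1 := by have := I.isLt; omega
        have : P I = y ⟨(I : ℕ) - r, hIr⟩ := by
          rw [hy]
          congr 1
          exact Fin.ext (by simp; omega)
        rw [this, hy0]; rfl
    have hΞne : Ξ ≠ 0 := by
      obtain ⟨i, hi⟩ := Function.ne_iff.mp hy0
      intro hc
      apply hi
      rw [← hΞy i, hc]; rfl
    have hα : (Zᴴ *ᵥ x) ⟨0, hs⟩ = 0 := by rw [hx0]; simp
    have h1 : Nf Z x = 0 := by rw [hx0, Nf_zero]
    have h2 : nn x = 0 := by rw [hx0, nn_zero]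
    have h3 := hZ Ξ hΞne
    rw [e1, e2, h1, h2, hα, hΞ0, hα]
    simpa using h3
  · have h1 := hZ x hx0
    have h2 := Nf_le Z hZ Ξ
    have h3 : Complex.normSq (Ξ ⟨0, hr⟩) = Complex.normSq ((Zᴴ *ᵥ x) ⟨0, hs⟩) := by rw [hΞ0]
    rw [e1, e2, h3]
    linarith

set_option maxHeartbeats 2000000 in
lemma part2 {r s : ℕ} (hr : 1 ≤ r) (hs : 1 ≤ s)
    (Z : Matrix (Fin r) (Fin s) ℂ)
    (W : Matrix (Fin (2 * r - 1)) (Fin (2 * s - 1)) ℂ)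
    (hW : ∀ (I : Fin (2 * r - 1)) (J : Fin (2 * s - 1)),
      W I J =
        if hI : (I : ℕ) < r then
          if hJ : (J : ℕ) < s then Z ⟨I, hI⟩ ⟨0, hs⟩ * Z ⟨0, hr⟩ ⟨J, hJ⟩
          else Z ⟨I, hI⟩ ⟨(J : ℕ) - s + 1, aux18_J s J hJ⟩
        else
          if hJ : (J : ℕ) < s then Z ⟨(I : ℕ) - r + 1, aux18_I r I hI⟩ ⟨J, hJ⟩
          else 0)
    (x : Fin r → ℂ) (hx0 : x ≠ 0) (hx : nn x ≤ Nf Z x) :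
    ∃ P : Fin (2 * r - 1) → ℂ, P ≠ 0 ∧ nn P ≤ Nf W P := by
  by_cases h00 : x ⟨0, hr⟩ = 0
  · -- P = (0, tail of x), Ξ = x
    set y : Fin (r - 1) → ℂ := fun i => x ⟨1 + i, by have := i.isLt; omega⟩ with hy
    set P : Fin (2 * r - 1) → ℂ := fun I => if h : (I : ℕ) < r then 0
      else x ⟨(I : ℕ) - r + 1, aux18_I r I h⟩ with hP
    have hPx : ∀ i : Fin r, P ⟨i, by omega⟩ = (0 : Fin r → ℂ) i := by
      intro i
      simp only [hP]
      rw [dif_pos (show ((⟨(i : ℕ), by omega⟩ : Fin (2 * r - 1)) : ℕ) < r from i.isLt)]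
      rfl
    have hPy : ∀ i : Fin (r - 1), P ⟨r + i, by have := i.isLt; omega⟩ = y i := by
      intro i
      simp only [hP]
      rw [dif_neg (show ¬ ((⟨r + (i : ℕ), by have := i.isLt; omega⟩ : Fin (2 * r - 1)) : ℕ) < r
        by simp)]
      simp only [hy]
      congr 1
      exact Fin.ext (by simp; omega)
    have hΞ0 : x ⟨0, hr⟩ = (Zᴴ *ᵥ (0 : Fin r → ℂ)) ⟨0, hs⟩ := by
      rw [h00]; simp
    have hΞy : ∀ i : Fin (r - 1), x ⟨1 + i, by have := i.isLt; omega⟩ = y i := fun i => rfl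
    obtain ⟨e1, e2⟩ := key_identity hr hs Z W hW (0 : Fin r → ℂ) y P x hPx hPy hΞ0 hΞy
    refine ⟨P, ?_, ?_⟩
    · obtain ⟨i, hi⟩ := Function.ne_iff.mp hx0
      have hi1 : 1 ≤ (i : ℕ) := by
        rcases Nat.eq_zero_or_pos (i : ℕ) with h | h
        · exfalso
          apply hi
          simp only [Pi.zero_apply]
          have hieq : i = ⟨0, hr⟩ := Fin.ext h
          rw [hieq, h00]
        · omega
      intro hPz
      apply hi
      simp only [Pi.zero_apply]
      have h2 : P ⟨r + ((i : ℕ) - 1), by have := i.isLt; omega⟩ = 0 := by rw [hPz]; rfl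
      simp only [hP] at h2
      rw [dif_neg (show ¬ ((⟨r + ((i : ℕ) - 1), by have := i.isLt; omega⟩ :
        Fin (2 * r - 1)) : ℕ) < r by simp)] at h2
      rw [← h2]
      congr 1
      exact Fin.ext (by simp; omega)
    · rw [e1, e2, Nf_zero, nn_zero, h00]
      have hz : (Zᴴ *ᵥ (0 : Fin r → ℂ)) ⟨0, hs⟩ = 0 := by simp
      rw [hz]
      simp only [Complex.normSq_zero]
      linarith
  · -- P = (x, c • tail of x), Ξ = c • x with c = α / x₀
    set α : ℂ := (Zᴴ *ᵥ x) ⟨0, hs⟩ with hα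
    set c : ℂ := α / x ⟨0, hr⟩ with hc
    set y : Fin (r - 1) → ℂ := fun i => c * x ⟨1 + i, by have := i.isLt; omega⟩ with hy
    set Ξ : Fin r → ℂ := fun k => c * x k with hΞ
    set P : Fin (2 * r - 1) → ℂ := fun I => if h : (I : ℕ) < r then x ⟨I, h⟩
      else c * x ⟨(I : ℕ) - r + 1, aux18_I r I h⟩ with hP
    have hPx : ∀ i : Fin r, P ⟨i, by omega⟩ = x i := by
      intro i
      simp only [hP]
      rw [dif_pos (show ((⟨(i : ℕ), by omega⟩ : Fin (2 * r - 1)) : ℕ) < r from i.isLt)]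
    have hPy : ∀ i : Fin (r - 1), P ⟨r + i, by have := i.isLt; omega⟩ = y i := by
      intro i
      simp only [hP]
      rw [dif_neg (show ¬ ((⟨r + (i : ℕ), by have := i.isLt; omega⟩ : Fin (2 * r - 1)) : ℕ) < r
        by simp)]
      simp only [hy]
      congr 2
      exact Fin.ext (by simp; omega)
    have hΞ0 : Ξ ⟨0, hr⟩ = (Zᴴ *ᵥ x) ⟨0, hs⟩ := by
      simp only [hΞ, hc]
      rw [div_mul_cancel₀ _ h00]
    have hΞy : ∀ i : Fin (r - 1), Ξ ⟨1 + i, by have := i.isLt; omega⟩ = y i := fun i => rfl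
    obtain ⟨e1, e2⟩ := key_identity hr hs Z W hW x y P Ξ hPx hPy hΞ0 hΞy
    refine ⟨P, ?_, ?_⟩
    · intro hPz
      apply h00
      have : P ⟨0, by omega⟩ = 0 := by rw [hPz]; rfl
      rw [← hPx ⟨0, hr⟩]
      exact this
    · have hsc1 : Nf Z Ξ = Complex.normSq c * Nf Z x := Nf_smul Z c x
      have hsc2 : nn Ξ = Complex.normSq c * nn x := nn_smul c x
      have hcnn : 0 ≤ Complex.normSq c := Complex.normSq_nonneg c
      rw [e1, e2, hsc1, hsc2, hΞ0]
      nlinarith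

lemma Nf_eq {r s : ℕ} (Z : Matrix (Fin r) (Fin s) ℂ) (x : Fin r → ℂ) :
    Nf Z x = ∑ j, Complex.normSq (∑ i, star (Z i j) * x i) := by
  rw [Nf]
  refine Finset.sum_congr rfl fun j _ => ?_
  congr 1

lemma entry_bound {r s : ℕ} (Z : Matrix (Fin r) (Fin s) ℂ)
    (hZ : ∀ v, v ≠ 0 → Nf Z v < nn v) (i : Fin r) (j : Fin s) :
    Z i j ∈ Metric.closedBall (0 : ℂ) 1 := by
  have hx0 : (Pi.single i (1 : ℂ) : Fin r → ℂ) ≠ 0 := by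
    intro h
    have := congrFun h i
    simp at this
  have hnn : nn (Pi.single i (1 : ℂ)) = 1 := by
    rw [nn, Finset.sum_eq_single i]
    · simp
    · intro b _ hb; simp [Pi.single_apply, hb]
    · simp
  have hNf : Nf Z (Pi.single i (1 : ℂ)) = ∑ j', Complex.normSq (Z i j') := by
    rw [Nf]
    refine Finset.sum_congr rfl fun j' _ => ?_
    rw [Matrix.mulVec_single]
    simp [Matrix.conjTranspose_apply]
  have h1 := hZ _ hx0
  rw [hnn, hNf] at h1
  have h2 : Complex.normSq (Z i j) ≤ ∑ j', Complex.normSq (Z i j') :=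
    Finset.single_le_sum (fun j' _ => Complex.normSq_nonneg _) (Finset.mem_univ j)
  have h3 : Complex.normSq (Z i j) ≤ 1 := by linarith
  rw [Metric.mem_closedBall, dist_zero_right]
  have h4 : ‖Z i j‖ ^ 2 = Complex.normSq (Z i j) := Complex.sq_norm _
  nlinarith [norm_nonneg (Z i j)]

end aux18

set_option maxHeartbeats 1000000

/-- The type I bounded symmetric domain `Ω_{r,s}`. -/
def OmegaI (r s : ℕ) : Set (Matrix (Fin r) (Fin s) ℂ) :=
  {Z | (1 - Z * Zᴴ).PosDef}

/-- The generalized Whitney map `f^w : M(r×s,ℂ) → M((2r−1)×(2s−1),ℂ)`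
(in the `0`-indexed description below: for row `I < r`, the entry in column `J < s` is
`Z I 0 * Z 0 J` and in column `J ≥ s` it is `Z I (J−s+1)`; for row `I ≥ r`, the entry in
column `J < s` is `Z (I−r+1) J` and in column `J ≥ s` it is `0`) maps `Ω_{r,s}` into
`Ω_{2r−1,2s−1}` and is proper: preimages of compact subsets of `Ω_{2r−1,2s−1}` are
compact. -/
theorem statement18 (r s : ℕ) (hr : 1 ≤ r) (hs : 1 ≤ s)
    (f : Matrix (Fin r) (Fin s) ℂ → Matrix (Fin (2 * r - 1)) (Fin (2 * s - 1)) ℂ)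
    (hf : ∀ (Z : Matrix (Fin r) (Fin s) ℂ) (I : Fin (2 * r - 1)) (J : Fin (2 * s - 1)),
      f Z I J =
        if hI : (I : ℕ) < r then
          if hJ : (J : ℕ) < s then
            Z ⟨I, hI⟩ ⟨0, hs⟩ * Z ⟨0, hr⟩ ⟨J, hJ⟩
          else
            Z ⟨I, hI⟩ ⟨(J : ℕ) - s + 1, by have := J.isLt; omega⟩
        else
          if hJ : (J : ℕ) < s then
            Z ⟨(I : ℕ) - r + 1, by have := I.isLt; omega⟩ ⟨J, hJ⟩
          else 0) :
    (∀ Z ∈ OmegaI r s, f Z ∈ OmegaI (2 * r - 1) (2 * s - 1)) ∧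
    ∀ K : Set (Matrix (Fin (2 * r - 1)) (Fin (2 * s - 1)) ℂ),
      K ⊆ OmegaI (2 * r - 1) (2 * s - 1) → IsCompact K →
      IsCompact {Z | Z ∈ OmegaI r s ∧ f Z ∈ K} := by
  have hmaps : ∀ Z ∈ OmegaI r s, f Z ∈ OmegaI (2 * r - 1) (2 * s - 1) := by
    intro Z hZ
    exact (posdef_iff (f Z)).mpr (part1 hr hs Z (f Z) (hf Z) ((posdef_iff Z).mp hZ))
  refine ⟨hmaps, ?_⟩
  intro K hK hKc
  -- continuity of f
  have hfc : Continuous f := by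
    apply continuous_matrix
    intro I J
    have hfe : (fun Z => f Z I J) = fun Z : Matrix (Fin r) (Fin s) ℂ =>
        if hI : (I : ℕ) < r then
          if hJ : (J : ℕ) < s then Z ⟨I, hI⟩ ⟨0, hs⟩ * Z ⟨0, hr⟩ ⟨J, hJ⟩
          else Z ⟨I, hI⟩ ⟨(J : ℕ) - s + 1, by have := J.isLt; omega⟩
        else
          if hJ : (J : ℕ) < s then Z ⟨(I : ℕ) - r + 1, by have := I.isLt; omega⟩ ⟨J, hJ⟩
          else 0 := funext fun Z => hf Z I J
    rw [hfe]
    by_cases hI : (I : ℕ) < r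
    · by_cases hJ : (J : ℕ) < s
      · simp only [dif_pos hI, dif_pos hJ]
        exact (continuous_id.matrix_elem _ _).mul (continuous_id.matrix_elem _ _)
      · simp only [dif_pos hI, dif_neg hJ]
        exact continuous_id.matrix_elem _ _
    · by_cases hJ : (J : ℕ) < s
      · simp only [dif_neg hI, dif_pos hJ]
        exact continuous_id.matrix_elem _ _
      · simp only [dif_neg hI, dif_neg hJ]
        exact continuous_const
  -- continuity of Z ↦ Nf Z x
  have hNc : ∀ x : Fin r → ℂ, Continuous fun Z : Matrix (Fin r) (Fin s) ℂ => Nf Z x := by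
    intro x
    have : (fun Z : Matrix (Fin r) (Fin s) ℂ => Nf Z x)
        = fun Z => ∑ j, Complex.normSq (∑ i, star (Z i j) * x i) := funext fun Z => Nf_eq Z x
    rw [this]
    apply continuous_finset_sum
    intro j _
    apply Complex.continuous_normSq.comp
    apply continuous_finset_sum
    intro i _
    exact (continuous_star.comp (continuous_id.matrix_elem _ _)).mul continuous_const
  -- the closed superdomain
  have hB : IsClosed {Z : Matrix (Fin r) (Fin s) ℂ | ∀ x, Nf Z x ≤ nn x} := by
    have he : {Z : Matrix (Fin r) (Fin s) ℂ | ∀ x, Nf Z x ≤ nn x}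
        = ⋂ x, {Z | Nf Z x ≤ nn x} := by
      ext Z; simp [Set.mem_iInter]
    rw [he]
    exact isClosed_iInter fun x => isClosed_le (hNc x) continuous_const
  have hSeq : {Z | Z ∈ OmegaI r s ∧ f Z ∈ K}
      = f ⁻¹' K ∩ {Z : Matrix (Fin r) (Fin s) ℂ | ∀ x, Nf Z x ≤ nn x} := by
    ext Z
    constructor
    · rintro ⟨hZ1, hZ2⟩
      exact ⟨hZ2, fun x => Nf_le Z ((posdef_iff Z).mp hZ1) x⟩
    · rintro ⟨hZ1, hZ2⟩
      have hZΩ : Z ∈ OmegaI r s := by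
        by_contra hc
        have hex : ∃ x, x ≠ 0 ∧ nn x ≤ Nf Z x := by
          by_contra h2
          push_neg at h2
          exact hc ((posdef_iff Z).mpr fun x hx => h2 x hx)
        obtain ⟨x, hx0, hx⟩ := hex
        obtain ⟨P, hP0, hPle⟩ := part2 hr hs Z (f Z) (hf Z) x hx0 hx
        have hfZ : f Z ∈ OmegaI (2 * r - 1) (2 * s - 1) := hK hZ1
        have := ((posdef_iff (f Z)).mp hfZ) P hP0
        linarith
      exact ⟨hZΩ, hZ1⟩
  have hclosed : IsClosed {Z | Z ∈ OmegaI r s ∧ f Z ∈ K} := by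
    rw [hSeq]
    exact (hKc.isClosed.preimage hfc).inter hB
  -- the compact cube
  have hC : IsCompact {Z : Matrix (Fin r) (Fin s) ℂ | ∀ i j, Z i j ∈ Metric.closedBall (0:ℂ) 1} := by
    have he : {Z : Matrix (Fin r) (Fin s) ℂ | ∀ i j, Z i j ∈ Metric.closedBall (0:ℂ) 1}
        = Set.pi Set.univ (fun _ : Fin r => Set.pi Set.univ
            fun _ : Fin s => Metric.closedBall (0:ℂ) 1) := by
      ext Z
      constructor
      · intro h i _ j _; exact h i j
      · intro h i j; exact h i (Set.mem_univ i) j (Set.mem_univ j)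
    rw [he]
    exact isCompact_univ_pi fun i => isCompact_univ_pi fun j => isCompact_closedBall 0 1
  have hsub : {Z | Z ∈ OmegaI r s ∧ f Z ∈ K}
      ⊆ {Z : Matrix (Fin r) (Fin s) ℂ | ∀ i j, Z i j ∈ Metric.closedBall (0:ℂ) 1} := by
    rintro Z ⟨hZ1, -⟩
    exact fun i j => entry_bound Z ((posdef_iff Z).mp hZ1) i j
  exact hC.of_isClosed_subset hclosed hsub
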